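/- Assume a² + D² ≠ 0 and T ≠ 0. A polynomial function W(x,y) = Σ_{0 ≤ i+j ≤ 2} α_{ij} x^i y^j of total degree at most two satisfies ∂W/∂x(x,y)·(Tx − y) + ∂W/∂y(x,y)·(Dx − a) = T·W(x,y) for all (x,y) ∈ ℝ² if and only if W = λ·V for some real constant λ, where V(x,y) = D²x² − DTxy + Dy² + a(T² − 2D)x − aTy + a². In other words, the space of quadratic inverse integrating factors is one-dimensional, spanned by V. -/

import Mathlib

/-- The quadratic inverse integrating factor
`V(x,y) = D²x² − DTxy + Dy² + a(T² − 2D)x − aTy + a²`. -/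
noncomputable def V (a T D x y : ℝ) : ℝ :=
  D ^ 2 * x ^ 2 - D * T * x * y + D * y ^ 2 + a * (T ^ 2 - 2 * D) * x - a * T * y + a ^ 2

/-- A generic polynomial of total degree at most two in two variables,
`W(x,y) = Σ_{0 ≤ i+j ≤ 2} α_{ij} x^i y^j`. -/
noncomputable def W (α₀₀ α₁₀ α₀₁ α₂₀ α₁₁ α₀₂ x y : ℝ) : ℝ :=
  α₀₀ + α₁₀ * x + α₀₁ * y + α₂₀ * x ^ 2 + α₁₁ * x * y + α₀₂ * y ^ 2

lemma derivWx (c0 c1 c2 c3 c4 c5 x y : ℝ) :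
    deriv (fun x' => W c0 c1 c2 c3 c4 c5 x' y) x = c1 + 2 * c3 * x + c4 * y := by
  have hlin : HasDerivAt (fun x' : ℝ => c1 * x') c1 x := by
    simpa using (hasDerivAt_id x).const_mul c1
  have hlin4 : HasDerivAt (fun x' : ℝ => c4 * x') c4 x := by
    simpa using (hasDerivAt_id x).const_mul c4
  have hp : HasDerivAt (fun x' : ℝ => x' ^ 2) (2 * x) x := by
    simpa using hasDerivAt_pow 2 x
  have h : HasDerivAt (fun x' : ℝ => c0 + c1 * x' + c2 * y + c3 * x' ^ 2 + c4 * x' * y + c5 * y ^ 2)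
      (c1 + c3 * (2 * x) + c4 * y) x := by
    have h1 : HasDerivAt (fun x' : ℝ => c0 + c1 * x') c1 x := by
      exact hlin.const_add c0
    have h2 : HasDerivAt (fun x' : ℝ => c0 + c1 * x' + c2 * y) c1 x :=
      h1.add_const (c2 * y)
    have h3 : HasDerivAt (fun x' : ℝ => c0 + c1 * x' + c2 * y + c3 * x' ^ 2)
        (c1 + c3 * (2 * x)) x := h2.add (hp.const_mul c3)
    have h4 : HasDerivAt (fun x' : ℝ => c0 + c1 * x' + c2 * y + c3 * x' ^ 2 + c4 * x' * y)
        (c1 + c3 * (2 * x) + c4 * y) x := h3.add (hlin4.mul_const y)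
    exact h4.add_const (c5 * y ^ 2)
  simp only [W]
  rw [h.deriv]; ring

lemma derivWy (c0 c1 c2 c3 c4 c5 x y : ℝ) :
    deriv (fun y' => W c0 c1 c2 c3 c4 c5 x y') y = c2 + c4 * x + 2 * c5 * y := by
  have hlin : HasDerivAt (fun y' : ℝ => c2 * y') c2 y := by
    simpa using (hasDerivAt_id y).const_mul c2
  have hlin4 : HasDerivAt (fun y' : ℝ => c4 * x * y') (c4 * x) y := by
    simpa using (hasDerivAt_id y).const_mul (c4 * x)
  have hp : HasDerivAt (fun y' : ℝ => y' ^ 2) (2 * y) y := by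
    simpa using hasDerivAt_pow 2 y
  have h : HasDerivAt (fun y' : ℝ => c0 + c1 * x + c2 * y' + c3 * x ^ 2 + c4 * x * y' + c5 * y' ^ 2)
      (c2 + c4 * x + c5 * (2 * y)) y := by
    have h1 : HasDerivAt (fun y' : ℝ => c0 + c1 * x + c2 * y') c2 y := by
      exact hlin.const_add (c0 + c1 * x)
    have h2 : HasDerivAt (fun y' : ℝ => c0 + c1 * x + c2 * y' + c3 * x ^ 2) c2 y :=
      h1.add_const (c3 * x ^ 2)
    have h3 : HasDerivAt (fun y' : ℝ => c0 + c1 * x + c2 * y' + c3 * x ^ 2 + c4 * x * y')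
        (c2 + c4 * x) y := h2.add hlin4
    exact h3.add (hp.const_mul c5)
  simp only [W]
  rw [h.deriv]; ring

lemma coeffs_eq_zero (b0 b1 b2 b3 b4 b5 : ℝ)
    (h : ∀ x y : ℝ, b0 + b1 * x + b2 * y + b3 * x ^ 2 + b4 * (x * y) + b5 * y ^ 2 = 0) :
    b0 = 0 ∧ b1 = 0 ∧ b2 = 0 ∧ b3 = 0 ∧ b4 = 0 ∧ b5 = 0 := by
  have h00 := h 0 0
  have h10 := h 1 0
  have hm10 := h (-1) 0
  have h01 := h 0 1
  have h0m1 := h 0 (-1)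
  have h11 := h 1 1
  norm_num at h00 h10 hm10 h01 h0m1 h11
  refine ⟨by linarith, by linarith, by linarith, by linarith, by linarith, by linarith⟩

/-- For `a² + D² ≠ 0` and `T ≠ 0`, a polynomial of degree at most two satisfies
`∇W · L = T·W` (with `L(x,y) = (Tx − y, Dx − a)`) if and only if it is a scalar
multiple of `V`: the space of quadratic inverse integrating factors is spanned by `V`. -/
theorem stmt_1 (a T D : ℝ) (haD : a ^ 2 + D ^ 2 ≠ 0) (hT : T ≠ 0)
    (α₀₀ α₁₀ α₀₁ α₂₀ α₁₁ α₀₂ : ℝ) :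
    (∀ x y : ℝ,
        deriv (fun x' => W α₀₀ α₁₀ α₀₁ α₂₀ α₁₁ α₀₂ x' y) x * (T * x - y)
          + deriv (fun y' => W α₀₀ α₁₀ α₀₁ α₂₀ α₁₁ α₀₂ x y') y * (D * x - a)
          = T * W α₀₀ α₁₀ α₀₁ α₂₀ α₁₁ α₀₂ x y)
      ↔ ∃ lam : ℝ, ∀ x y : ℝ,
          W α₀₀ α₁₀ α₀₁ α₂₀ α₁₁ α₀₂ x y = lam * V a T D x y := by
  constructor
  · intro h
    have h' : ∀ x y : ℝ,
        (-(a * α₀₁) - T * α₀₀) + (D * α₀₁ - a * α₁₁) * x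
          + (-α₁₀ - 2 * a * α₀₂ - T * α₀₁) * y + (T * α₂₀ + D * α₁₁) * x ^ 2
          + (-2 * α₂₀ + 2 * D * α₀₂) * (x * y) + (-α₁₁ - T * α₀₂) * y ^ 2 = 0 := by
      intro x y
      have hx := h x y
      rw [derivWx, derivWy] at hx
      simp only [W] at hx
      linear_combination hx
    obtain ⟨hb0, hb1, hb2, hb3, hb4, hb5⟩ := coeffs_eq_zero _ _ _ _ _ _ h'
    by_cases hD : D = 0
    · subst hD
      have ha : a ≠ 0 := by
        intro h0; apply haD; rw [h0]; ring
      -- α₁₁ = 0, α₀₂ = 0, α₂₀ = 0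
      have e11 : α₁₁ = 0 := by
        have : a * α₁₁ = 0 := by linarith
        exact (mul_eq_zero.mp this).resolve_left ha
      have e02 : α₀₂ = 0 := by
        have : T * α₀₂ = 0 := by linarith
        exact (mul_eq_zero.mp this).resolve_left hT
      have e20 : α₂₀ = 0 := by nlinarith [hb4, e02]
      refine ⟨-α₀₁ / (a * T), fun x y => ?_⟩
      have e10 : α₁₀ = -T * α₀₁ := by rw [e02] at hb2; linarith
      have e00 : T * α₀₀ = -a * α₀₁ := by linarith
      rw [div_mul_eq_mul_div, eq_div_iff (mul_ne_zero ha hT)]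
      simp only [W, V]
      linear_combination a * e00 + a * T * x * e10 + a * T * x ^ 2 * e20
        + a * T * x * y * e11 + a * T * y ^ 2 * e02
    · refine ⟨α₀₂ / D, fun x y => ?_⟩
      have h20 : α₂₀ = D * α₀₂ := by linarith
      have h11 : α₁₁ = -T * α₀₂ := by linarith
      have h01 : D * α₀₁ = -(a * T * α₀₂) := by linear_combination hb1 - a * hb5
      have h10 : D * α₁₀ = a * (T ^ 2 - 2 * D) * α₀₂ := by
        linear_combination (-D) * hb2 - T * h01
      have h00 : D * α₀₀ = a ^ 2 * α₀₂ := by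
        have hc : T * (D * α₀₀) = T * (a ^ 2 * α₀₂) := by
          linear_combination (-D) * hb0 - a * hb1 + a ^ 2 * hb5
        exact mul_left_cancel₀ hT hc
      have key : D * W α₀₀ α₁₀ α₀₁ α₂₀ α₁₁ α₀₂ x y = α₀₂ * V a T D x y := by
        simp only [W, V]
        linear_combination h00 + x * h10 + y * h01 + x ^ 2 * D * h20 + x * y * D * h11
      field_simp
      linear_combination key
  · rintro ⟨lam, hlam⟩
    have h' : ∀ x y : ℝ,
        (α₀₀ - lam * a ^ 2) + (α₁₀ - lam * (a * (T ^ 2 - 2 * D))) * x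
          + (α₀₁ + lam * (a * T)) * y + (α₂₀ - lam * D ^ 2) * x ^ 2
          + (α₁₁ + lam * (D * T)) * (x * y) + (α₀₂ - lam * D) * y ^ 2 = 0 := by
      intro x y
      have := hlam x y
      simp only [W, V] at this
      linear_combination this
    obtain ⟨hb0, hb1, hb2, hb3, hb4, hb5⟩ := coeffs_eq_zero _ _ _ _ _ _ h'
    intro x y
    rw [derivWx, derivWy]
    simp only [W]
    have e00 : α₀₀ = lam * a ^ 2 := by linarith
    have e10 : α₁₀ = lam * (a * (T ^ 2 - 2 * D)) := by linarith
    have e01 : α₀₁ = -(lam * (a * T)) := by linarith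
    have e20 : α₂₀ = lam * D ^ 2 := by linarith
    have e11 : α₁₁ = -(lam * (D * T)) := by linarith
    have e02 : α₀₂ = lam * D := by linarith
    subst e00 e10 e01 e20 e11 e02
    ring
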